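/- Let k be a positive integer, let A be a finite set, and let g : 𝔽₂ᵏ → A. Under the uniform distribution on 𝔽₂ᵏ, the value g(X₁,…,X_k) is independent of the coordinate variables (X₁,…,X_k) (equivalently, for every α ∈ A and every (a₁,…,a_k) ∈ 𝔽₂ᵏ: 2ᵏ · #{x ∈ 𝔽₂ᵏ : g(x) = α, x = (a₁,…,a_k)} = #{x : g(x) = α}) if and only if g(X) is independent of the linear combination c·X = c₁X₁ + ⋯ + c_kX_k (mod 2) for every nonzero c ∈ 𝔽₂ᵏ (equivalently, for every α ∈ A, every nonzero c ∈ 𝔽₂ᵏ and every b ∈ 𝔽₂: 2 · #{x ∈ 𝔽₂ᵏ : g(x) = α, c·x = b} = #{x : g(x) = α}). -/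

import Mathlib

noncomputable section

open Finset

/-- Inner product modulo 2 on `𝔽₂ⁿ`. -/
def dotp {n : ℕ} (c x : Fin n → ZMod 2) : ZMod 2 := ∑ j, c j * x j

/-- Hamming weight of a vector in `𝔽₂ⁿ`. -/
def wt {n : ℕ} (c : Fin n → ZMod 2) : ℕ := (Finset.univ.filter fun j => c j ≠ 0).card

/-- `f` is `t`-th order correlation-immune: fixing any `t` coordinates does not
change the output distribution (counting form). -/
def CI {n : ℕ} {A : Type*} (t : ℕ) (f : (Fin n → ZMod 2) → A) : Prop :=
  ∀ S : Finset (Fin n), S.card = t → ∀ a : Fin n → ZMod 2, ∀ α : A,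
    2 ^ t * Nat.card {x : Fin n → ZMod 2 // f x = α ∧ ∀ j ∈ S, x j = a j}
      = Nat.card {x : Fin n → ZMod 2 // f x = α}

/-- Binary expansion of `k` as a vector in `𝔽₂ⁿ`, `k = ∑ x_j 2^j`. -/
def bin (n k : ℕ) : Fin n → ZMod 2 := fun j => ((k / 2 ^ (j : ℕ)) % 2 : ℕ)

/-- `ω i = exp(2π√-1 / 2^i)`, a primitive `2^i`-th root of unity in `ℂ`. -/
def ω (i : ℕ) : ℂ := Complex.exp (2 * Real.pi * Complex.I / 2 ^ i)

open scoped Classical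

/-- character -/
def χ : ZMod 2 → ℤ := fun b => (-1) ^ b.val

lemma chi_add : ∀ a b : ZMod 2, χ (a + b) = χ a * χ b := by decide

lemma chi_zero : χ 0 = 1 := rfl
lemma chi_one : χ 1 = -1 := rfl

lemma zmod2_ne_zero : ∀ a : ZMod 2, a ≠ 0 → a = 1 := by decide

lemma zmod2_add_add : ∀ a b : ZMod 2, a + b + b = a := by decide

lemma dotp_add_left {n : ℕ} (c d x : Fin n → ZMod 2) :
    dotp (c + d) x = dotp c x + dotp d x := by
  simp [dotp, add_mul, Finset.sum_add_distrib]

lemma dotp_add_right {n : ℕ} (c x y : Fin n → ZMod 2) :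
    dotp c (x + y) = dotp c x + dotp c y := by
  simp [dotp, mul_add, Finset.sum_add_distrib]

lemma dotp_comm {n : ℕ} (c x : Fin n → ZMod 2) : dotp c x = dotp x c := by
  simp [dotp, mul_comm]

lemma dotp_zero_left {n : ℕ} (x : Fin n → ZMod 2) : dotp 0 x = 0 := by
  simp [dotp]

lemma dotp_single {n : ℕ} (j : Fin n) (y : Fin n → ZMod 2) :
    dotp (Pi.single j 1) y = y j := by
  unfold dotp
  rw [Finset.sum_eq_single j]
  · simp
  · intro i _ hij
    rw [Pi.single_eq_of_ne hij, zero_mul]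
  · simp

/-- orthogonality: sum of character over all c vanishes for y ≠ 0 -/
lemma sum_chi_ne {n : ℕ} (y : Fin n → ZMod 2) (hy : y ≠ 0) :
    ∑ c : Fin n → ZMod 2, χ (dotp c y) = 0 := by
  obtain ⟨j, hj⟩ : ∃ j, y j ≠ 0 := by
    by_contra h
    push_neg at h
    exact hy (funext fun j => h j)
  have hyj : y j = 1 := zmod2_ne_zero _ hj
  refine Finset.sum_ninvolution (fun c => c + Pi.single j 1) ?_ ?_ (fun _ => mem_univ _) ?_
  · intro c
    rw [dotp_add_left, dotp_single, hyj, chi_add, chi_one]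
    ring
  · intro c _ h
    have := congrFun h j
    simp only [Pi.add_apply, Pi.single_eq_same] at this
    simpa using this
  · intro c
    funext i
    simp [zmod2_add_add]

lemma sum_chi {n : ℕ} (y : Fin n → ZMod 2) :
    ∑ c : Fin n → ZMod 2, χ (dotp c y) = if y = 0 then 2 ^ n else 0 := by
  by_cases hy : y = 0
  · subst hy
    simp only [if_pos rfl]
    have : ∀ c : Fin n → ZMod 2, χ (dotp c 0) = 1 := by
      intro c; rw [show dotp c 0 = 0 by simp [dotp], chi_zero]
    rw [Finset.sum_congr rfl fun c _ => this c, Finset.sum_const]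
    simp [Fintype.card_fun]
  · rw [if_neg hy]
    exact sum_chi_ne y hy

lemma zmod2_ne_iff : ∀ a : ZMod 2, ¬ a = 0 ↔ a = 1 := by decide

lemma zmod2_add_self : ∀ a : ZMod 2, a + a = 0 := by decide

lemma zmod2_add_eq_zero : ∀ u v : ZMod 2, u + v = 0 → u = v := by decide

lemma vec_add_eq_zero_iff {n : ℕ} (x a : Fin n → ZMod 2) : x + a = 0 ↔ x = a := by
  constructor
  · intro h
    funext i
    exact zmod2_add_eq_zero _ _ (congrFun h i)
  · rintro rfl
    funext i
    exact zmod2_add_self _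

lemma sum_chi_over {n : ℕ} (F : Finset (Fin n → ZMod 2)) (c : Fin n → ZMod 2) :
    ∑ x ∈ F, χ (dotp c x)
      = ((F.filter fun x => dotp c x = 0).card : ℤ)
        - ((F.filter fun x => dotp c x = 1).card : ℤ) := by
  rw [← Finset.sum_filter_add_sum_filter_not F (fun x => dotp c x = 0)]
  have h1 : ∑ x ∈ F.filter (fun x => dotp c x = 0), χ (dotp c x)
      = ((F.filter fun x => dotp c x = 0).card : ℤ) := by
    rw [Finset.sum_congr rfl (fun x hx => by
      rw [(Finset.mem_filter.mp hx).2, chi_zero])]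
    simp
  have h2 : F.filter (fun x => ¬ dotp c x = 0) = F.filter (fun x => dotp c x = 1) := by
    apply Finset.filter_congr
    intro x _
    exact zmod2_ne_iff _
  have h3 : ∑ x ∈ F.filter (fun x => dotp c x = 1), χ (dotp c x)
      = -((F.filter fun x => dotp c x = 1).card : ℤ) := by
    rw [Finset.sum_congr rfl (fun x hx => by
      rw [(Finset.mem_filter.mp hx).2, chi_one])]
    simp
  rw [h1, h2, h3]
  ring

lemma card_single {k : ℕ} {A : Type*} (g : (Fin k → ZMod 2) → A) (α : A)
    (a : Fin k → ZMod 2) [DecidablePred fun x : Fin k → ZMod 2 => g x = α ∧ x = a] :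
    (univ.filter fun x => g x = α ∧ x = a).card = if g a = α then 1 else 0 := by
  by_cases h : g a = α
  · rw [if_pos h]
    have : (univ.filter fun x => g x = α ∧ x = a) = {a} := by
      ext x
      simp only [mem_filter, mem_univ, true_and, mem_singleton]
      constructor
      · rintro ⟨-, rfl⟩; rfl
      · rintro rfl; exact ⟨h, rfl⟩
    rw [this, card_singleton]
  · rw [if_neg h, Finset.card_eq_zero, Finset.filter_eq_empty_iff]
    rintro x - ⟨h1, rfl⟩
    exact h h1

/-- Xiao–Massey linear combination lemma (counting form): `g(X)` is independent of
`(X₁,…,X_k)` iff `g(X)` is independent of every nonzero linear combination `c·X`. -/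
theorem stmt6 (k : ℕ) (hk : 0 < k) (A : Type*) [Finite A]
    (g : (Fin k → ZMod 2) → A) :
    (∀ α : A, ∀ a : Fin k → ZMod 2,
        2 ^ k * Nat.card {x : Fin k → ZMod 2 // g x = α ∧ x = a}
          = Nat.card {x : Fin k → ZMod 2 // g x = α}) ↔
    (∀ α : A, ∀ c : Fin k → ZMod 2, c ≠ 0 → ∀ b : ZMod 2,
        2 * Nat.card {x : Fin k → ZMod 2 // g x = α ∧ dotp c x = b}
          = Nat.card {x : Fin k → ZMod 2 // g x = α}) := by
  classical
  have card_eq : ∀ (p : (Fin k → ZMod 2) → Prop) [DecidablePred p],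
      Nat.card {x // p x} = (univ.filter p).card := by
    intro p _
    rw [Nat.card_eq_fintype_card, Fintype.card_subtype]
  have huniv : (univ : Finset (Fin k → ZMod 2)).card = 2 ^ k := by
    simp [Finset.card_univ]
  constructor
  · intro H α c hc b
    simp only [card_eq] at H ⊢
    by_cases hN : (univ.filter fun x => g x = α).card = 0
    · rw [hN, Nat.mul_eq_zero]
      right
      have hsub : (univ.filter fun x => g x = α ∧ dotp c x = b)
          ⊆ (univ.filter fun x => g x = α) := by
        intro x hx
        exact mem_filter.mpr ⟨mem_univ x, (mem_filter.mp hx).2.1⟩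
      have := Finset.card_le_card hsub
      omega
    · obtain ⟨x0, hx0⟩ := Finset.card_pos.mp (Nat.pos_of_ne_zero hN)
      have hg0 : g x0 = α := (mem_filter.mp hx0).2
      have h2k : 0 < 2 ^ k := Nat.pow_pos (by norm_num)
      have hNval : (univ.filter fun x => g x = α).card = 2 ^ k := by
        have := H α x0
        rw [card_single g α x0, if_pos hg0, mul_one] at this
        omega
      have hall : ∀ a, g a = α := by
        intro a
        by_contra h
        have := H α a
        rw [card_single g α a, if_neg h, mul_zero, hNval] at this
        omega
      have hfe : (univ.filter fun x => g x = α ∧ dotp c x = b)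
          = univ.filter fun x => dotp c x = b := by
        apply Finset.filter_congr
        intro x _
        simp [hall x]
      rw [hfe, hNval]
      have hs : ∑ x : Fin k → ZMod 2, χ (dotp c x) = 0 := by
        rw [Finset.sum_congr rfl (fun x _ => by rw [dotp_comm])]
        exact sum_chi_ne c hc
      rw [sum_chi_over] at hs
      have hpart := Finset.card_filter_add_card_filter_not
        (s := (univ : Finset (Fin k → ZMod 2))) (p := fun x => dotp c x = 0)
      have hneg : (univ.filter fun x => ¬ dotp c x = 0)
          = univ.filter fun x => dotp c x = 1 := by
        apply Finset.filter_congr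
        intro x _
        exact (zmod2_ne_iff _)
      rw [hneg, huniv] at hpart
      have heq : (univ.filter fun x => dotp c x = 0).card
          = (univ.filter fun x => dotp c x = 1).card := by
        have := sub_eq_zero.mp hs
        exact_mod_cast this
      rcases (show ∀ b : ZMod 2, b = 0 ∨ b = 1 by decide) b with rfl | rfl
      · omega
      · omega
  · intro H α a
    simp only [card_eq] at H ⊢
    set F := univ.filter fun x => g x = α with hF
    have hsub : ∀ (c : Fin k → ZMod 2) (b : ZMod 2),
        (univ.filter fun x => g x = α ∧ dotp c x = b)
          = F.filter fun x => dotp c x = b := by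
      intro c b
      rw [hF, Finset.filter_filter]
    have hzero : ∀ c : Fin k → ZMod 2, c ≠ 0 → ∑ x ∈ F, χ (dotp c x) = 0 := by
      intro c hc
      rw [sum_chi_over]
      have h0 := H α c hc 0
      have h1 := H α c hc 1
      rw [hsub] at h0 h1
      have : (F.filter fun x => dotp c x = 0).card
          = (F.filter fun x => dotp c x = 1).card := by omega
      rw [this, sub_self]
    have key : ∑ c : Fin k → ZMod 2, ∑ x ∈ F, χ (dotp c (x + a)) = (F.card : ℤ) := by
      rw [Finset.sum_eq_single (0 : Fin k → ZMod 2)]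
      · simp [dotp_zero_left, chi_zero]
      · intro c _ hc
        rw [Finset.sum_congr rfl (fun x _ => by rw [dotp_add_right, chi_add]),
          ← Finset.sum_mul, hzero c hc, zero_mul]
      · simp
    have key2 : ∑ c : Fin k → ZMod 2, ∑ x ∈ F, χ (dotp c (x + a))
        = if a ∈ F then (2 ^ k : ℤ) else 0 := by
      rw [Finset.sum_comm]
      have hx : ∀ x ∈ F, ∑ c : Fin k → ZMod 2, χ (dotp c (x + a))
          = if x = a then (2 ^ k : ℤ) else 0 := by
        intro x _
        rw [sum_chi]
        exact if_congr (vec_add_eq_zero_iff x a) rfl rfl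
      rw [Finset.sum_congr rfl hx, Finset.sum_ite_eq' F a (fun _ => (2 ^ k : ℤ))]
    have hfin : (if a ∈ F then (2 ^ k : ℤ) else 0) = (F.card : ℤ) := by
      rw [← key2, key]
    rw [card_single g α a]
    by_cases hga : g a = α
    · have haF : a ∈ F := by
        rw [hF]; exact mem_filter.mpr ⟨mem_univ a, hga⟩
      rw [if_pos haF] at hfin
      have : F.card = 2 ^ k := by exact_mod_cast hfin.symm
      rw [if_pos hga, this, mul_one]
    · have haF : a ∉ F := by
        rw [hF]
        intro h
        exact hga (mem_filter.mp h).2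
      rw [if_neg haF] at hfin
      have : F.card = 0 := by exact_mod_cast hfin.symm
      rw [if_neg hga, this, mul_zero]
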